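/- For any positive integer k and n = 2k, with ε_j ∈ F₂^k defined by (ε_j)_i = 1 iff i ⪯ j (0 ≤ i ≤ k−1), one has ε_k = Σ_{j ≺ k} ε_{n−j}, summing over all j ⪯ k with j ≠ k. -/

import Mathlib

open scoped Classical

/-- Bitwise domination: every bit of `a` is ≤ the corresponding bit of `b`. -/
def Pre (a b : ℕ) : Prop := ∀ t, a.testBit t = true → b.testBit t = true
/-- The vector `ε_i ∈ F₂^k` whose `j`-th coordinate is `1` iff `j ⪯ i`. -/
noncomputable def eps (k : ℕ) (i : ℕ) : Fin k → ZMod 2 :=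
  fun j => if Pre j.val i then 1 else 0

open Polynomial

lemma pre_zero_left (b : ℕ) : Pre 0 b := fun t ht => by simp [Nat.zero_testBit] at ht

lemma pre_zero_right {a : ℕ} (h : Pre a 0) : a = 0 := by
  refine Nat.eq_of_testBit_eq fun i => ?_
  rw [Nat.zero_testBit]
  by_contra hc
  have := h i (by simpa using hc)
  simp [Nat.zero_testBit] at this

lemma pre_step {a b : ℕ} : Pre a b ↔ (a % 2 = 1 → b % 2 = 1) ∧ Pre (a / 2) (b / 2) := by
  constructor
  · intro h
    refine ⟨fun ha => ?_, fun t ht => ?_⟩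
    · have := h 0 (by simp [Nat.testBit_zero, ha])
      simpa [Nat.testBit_zero] using this
    · have := h (t + 1) (by rw [Nat.testBit_succ]; exact ht)
      rwa [Nat.testBit_succ] at this
  · rintro ⟨h0, h⟩ t ht
    cases t with
    | zero =>
      rw [Nat.testBit_zero] at ht ⊢
      simp only [decide_eq_true_eq] at ht ⊢
      exact h0 ht
    | succ t =>
      rw [Nat.testBit_succ] at ht ⊢
      exact h _ ht

lemma pre_le {a b : ℕ} (h : Pre a b) : a ≤ b := by
  have hab : a &&& b = a := by
    refine Nat.eq_of_testBit_eq fun i => ?_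
    rw [Nat.testBit_and]
    cases hb : a.testBit i
    · simp
    · simp [h i hb]
  calc a = a &&& b := hab.symm
    _ ≤ b := Nat.and_le_right

lemma pre_sub {k : ℕ} : ∀ j, Pre j k → Pre (k - j) k := by
  induction k using Nat.strong_induction_on with
  | _ k ih =>
    intro j hj
    rcases Nat.eq_zero_or_pos k with hk | hk
    · subst hk; simpa using pre_zero_left 0
    · obtain ⟨h0, h1⟩ := pre_step.mp hj
      have hjk : j ≤ k := pre_le hj
      have hj2 : j / 2 ≤ k / 2 := pre_le h1
      have hmod : (k - j) % 2 = k % 2 - j % 2 := by omega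
      have hdiv : (k - j) / 2 = k / 2 - j / 2 := by omega
      refine pre_step.mpr ⟨fun h => by omega, ?_⟩
      rw [hdiv]
      exact ih (k / 2) (Nat.div_lt_self hk one_lt_two) (j / 2) h1

/-- The set of submasks of `k`. -/
noncomputable def SM (k : ℕ) : Finset ℕ := (Finset.range (k + 1)).filter (fun m => Pre m k)

lemma mem_SM {m k : ℕ} : m ∈ SM k ↔ Pre m k := by
  simp only [SM, Finset.mem_filter, Finset.mem_range, Nat.lt_succ_iff, and_iff_right_iff_imp]
  exact pre_le

lemma SM_even (q : ℕ) : SM (2 * q) = (SM q).image (fun m => 2 * m) := by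
  ext m
  simp only [mem_SM, Finset.mem_image]
  constructor
  · intro h
    obtain ⟨h0, h1⟩ := pre_step.mp h
    have hm : m % 2 = 0 := by omega
    refine ⟨m / 2, ?_, by omega⟩
    simpa [Nat.mul_div_cancel_left q two_pos] using h1
  · rintro ⟨m', hm', rfl⟩
    refine pre_step.mpr ⟨by omega, ?_⟩
    simpa [Nat.mul_div_cancel_left _ two_pos] using hm'

lemma SM_odd (q : ℕ) :
    SM (2 * q + 1) = (SM q).image (fun m => 2 * m) ∪ (SM q).image (fun m => 2 * m + 1) := by
  ext m
  simp only [mem_SM, Finset.mem_union, Finset.mem_image]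
  have hdiv : (2 * q + 1) / 2 = q := by omega
  constructor
  · intro h
    obtain ⟨_, h1⟩ := pre_step.mp h
    rw [hdiv] at h1
    rcases Nat.mod_two_eq_zero_or_one m with he | ho
    · exact Or.inl ⟨m / 2, h1, by omega⟩
    · exact Or.inr ⟨m / 2, h1, by omega⟩
  · rintro (⟨m', hm', rfl⟩ | ⟨m', hm', rfl⟩) <;>
      refine pre_step.mpr ⟨by omega, ?_⟩ <;>
      · rw [hdiv]
        convert hm' using 2
        omega

lemma sq_xp1 : ((X + 1 : Polynomial (ZMod 2))) ^ 2 = X ^ 2 + 1 := by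
  have h2 : (2 : Polynomial (ZMod 2)) = 0 := CharTwo.two_eq_zero
  ring_nf
  rw [h2]
  ring

lemma pow_two_mul (m : ℕ) :
    ((X + 1 : Polynomial (ZMod 2))) ^ (2 * m)
      = (Polynomial.expand (ZMod 2) 2) ((X + 1) ^ m) := by
  rw [map_pow, map_add, Polynomial.expand_X, map_one, pow_mul, sq_xp1]

lemma G_even (q : ℕ) (h : ∑ m ∈ SM q, ((X + 1 : Polynomial (ZMod 2))) ^ m = X ^ q) :
    ∑ m ∈ SM q, ((X + 1 : Polynomial (ZMod 2))) ^ (2 * m) = X ^ (2 * q) := by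
  simp_rw [pow_two_mul]
  rw [← map_sum, h, map_pow, Polynomial.expand_X, ← pow_mul]

lemma G_eq : ∀ k : ℕ, ∑ m ∈ SM k, ((X + 1 : Polynomial (ZMod 2))) ^ m = X ^ k := by
  intro k
  induction k using Nat.strong_induction_on with
  | _ k ih =>
    rcases Nat.eq_zero_or_pos k with hk | hk
    · subst hk
      have : SM 0 = {0} := by
        ext m; simp only [mem_SM, Finset.mem_singleton]
        exact ⟨pre_zero_right, fun h => h ▸ pre_zero_left 0⟩
      simp [this]
    · have hq : k / 2 < k := Nat.div_lt_self hk one_lt_two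
      have hG := G_even (k / 2) (ih (k / 2) hq)
      rcases Nat.mod_two_eq_zero_or_one k with he | ho
      · have hk2 : k = 2 * (k / 2) := by omega
        rw [hk2, SM_even, Finset.sum_image (by intro a _ b _ hab; simp only at hab; omega)]
        exact hG
      · have hk2 : k = 2 * (k / 2) + 1 := by omega
        rw [hk2, SM_odd, Finset.sum_union (by
          simp only [Finset.disjoint_left, Finset.mem_image]
          rintro a ⟨x, _, rfl⟩ ⟨y, _, hy⟩
          omega)]
        rw [Finset.sum_image (by intro a _ b _ hab; simp only at hab; omega),
            Finset.sum_image (by intro a _ b _ hab; simp only at hab; omega)]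
        have h2 : (2 : Polynomial (ZMod 2)) = 0 := CharTwo.two_eq_zero
        simp_rw [pow_succ]
        rw [← Finset.sum_mul, hG]
        ring_nf
        rw [h2]
        ring

lemma sum_X_pow (k : ℕ) :
    ∑ m ∈ SM k, (X : Polynomial (ZMod 2)) ^ m = (X + 1) ^ k := by
  have h := congrArg (fun p : Polynomial (ZMod 2) => p.comp (X + 1)) (G_eq k)
  rw [Polynomial.sum_comp] at h
  · simp only [Polynomial.pow_comp, Polynomial.add_comp, Polynomial.X_comp,
      Polynomial.one_comp] at h
    have hx : (X + 1 + 1 : Polynomial (ZMod 2)) = X := by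
      have h2 : (2 : Polynomial (ZMod 2)) = 0 := CharTwo.two_eq_zero
      ring_nf
      rw [h2]
      ring
    rw [hx] at h
    exact h

lemma coeff_xp1_pow (s t : ℕ) :
    ((X + 1 : Polynomial (ZMod 2)) ^ s).coeff t = if Pre t s then 1 else 0 := by
  rw [← sum_X_pow, Polynomial.finset_sum_coeff]
  simp_rw [Polynomial.coeff_X_pow]
  rw [Finset.sum_ite_eq (SM s) t (fun _ => (1 : ZMod 2))]
  simp [mem_SM]

theorem stmt19 (k : ℕ) (hk : 0 < k) (n : ℕ) (hn : n = 2 * k) :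
    eps k k =
      ∑ j ∈ (Finset.range (k+1)).filter (fun j => Pre j k ∧ j ≠ k), eps k (n - j) := by
  subst hn
  funext t
  have ht : (t : ℕ) < k := t.isLt
  rw [Finset.sum_apply]
  simp only [eps]
  simp_rw [show ∀ s, (if Pre t.val s then (1 : ZMod 2) else 0)
      = ((X + 1 : Polynomial (ZMod 2)) ^ s).coeff t from fun s => (coeff_xp1_pow s t).symm]
  rw [← Polynomial.finset_sum_coeff]
  have hre : ∑ j ∈ (Finset.range (k+1)).filter (fun j => Pre j k ∧ j ≠ k),
      ((X + 1 : Polynomial (ZMod 2)) ^ (2 * k - j))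
      = ∑ m ∈ (SM k).erase 0, ((X + 1 : Polynomial (ZMod 2)) ^ (k + m)) := by
    refine Finset.sum_nbij' (fun j => k - j) (fun m => k - m) ?_ ?_ ?_ ?_ ?_
    · intro j hj
      simp only [Finset.mem_filter, Finset.mem_range] at hj
      obtain ⟨_, hjk, hne⟩ := hj
      have := pre_le hjk
      simp only [Finset.mem_erase, mem_SM]
      exact ⟨by omega, pre_sub j hjk⟩
    · intro m hm
      simp only [Finset.mem_erase, mem_SM] at hm
      obtain ⟨hne, hmk⟩ := hm
      have := pre_le hmk
      simp only [Finset.mem_filter, Finset.mem_range]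
      exact ⟨by omega, pre_sub m hmk, by omega⟩
    · intro j hj
      simp only [Finset.mem_filter, Finset.mem_range] at hj
      have := pre_le hj.2.1
      show k - (k - j) = j
      omega
    · intro m hm
      simp only [Finset.mem_erase, mem_SM] at hm
      have := pre_le hm.2
      show k - (k - m) = m
      omega
    · intro j hj
      simp only [Finset.mem_filter, Finset.mem_range] at hj
      have := pre_le hj.2.1
      show (X + 1 : Polynomial (ZMod 2)) ^ (2 * k - j) = (X + 1) ^ (k + (k - j))
      congr 1
      omega
  rw [hre]
  simp_rw [pow_add]
  rw [← Finset.mul_sum]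
  have herase : ∑ m ∈ (SM k).erase 0, ((X + 1 : Polynomial (ZMod 2)) ^ m)
      = X ^ k + 1 := by
    have h0 : (0 : ℕ) ∈ SM k := mem_SM.mpr (pre_zero_left k)
    have := Finset.sum_erase_add (SM k) (fun m => ((X + 1 : Polynomial (ZMod 2)) ^ m)) h0
    rw [G_eq k] at this
    have h2 : (2 : Polynomial (ZMod 2)) = 0 := CharTwo.two_eq_zero
    have : ∑ m ∈ (SM k).erase 0, ((X + 1 : Polynomial (ZMod 2)) ^ m) = X ^ k - 1 := by
      rw [← this]; simp
    rw [this, sub_eq_add_neg, CharTwo.neg_eq]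
  rw [herase, mul_add, mul_one, Polynomial.coeff_add]
  rw [Polynomial.coeff_mul_X_pow' ((X + 1 : Polynomial (ZMod 2)) ^ k) k t]
  simp [Nat.not_le.mpr ht]
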